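/- There exist three residents X, Y, Z and three centers A, B, C in the Euclidean plane ℝ², and two bijections M', M* from {X, Y, Z} to {A, B, C}, such that: (i) the cost of M* is strictly less than the cost of M', where the cost of a bijection g is ∑_{p ∈ {X,Y,Z}} ‖p − g(p)‖²; and (ii) every bijection obtained from M' by swapping the assigned centers of exactly two residents has cost strictly greater than the cost of M'. Hence a bijection that is locally optimal under pairwise swaps need not minimize the sum of squared distances. -/

import Mathlib

open Finset

lemma norm_sq_two (x y : EuclideanSpace ℝ (Fin 2)) :
    ‖x - y‖ ^ 2 = (x 0 - y 0) ^ 2 + (x 1 - y 1) ^ 2 := by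
  rw [EuclideanSpace.norm_eq, Real.sq_sqrt (by positivity)]
  simp [Fin.sum_univ_two, Real.norm_eq_abs, sq_abs]

/-- There are three residents and three centers in the plane and two bijective
assignments `M'` and `Mstar` such that `Mstar` has strictly smaller cost (sum of
squared distances) than `M'`, yet every bijection obtained from `M'` by swapping the
assigned centers of exactly two residents has strictly larger cost than `M'`.
Hence swap-local optimality does not imply global optimality. -/
theorem stmt_8 :
    ∃ (r c : Fin 3 → EuclideanSpace ℝ (Fin 2)) (M' Mstar : Equiv.Perm (Fin 3)),
      Function.Injective r ∧ Function.Injective c ∧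
      (∑ p, ‖r p - c (Mstar p)‖ ^ 2 < ∑ p, ‖r p - c (M' p)‖ ^ 2) ∧
      (∀ i j : Fin 3, i ≠ j →
        ∑ p, ‖r p - c (M' p)‖ ^ 2 < ∑ p, ‖r p - c (M' (Equiv.swap i j p))‖ ^ 2) := by
  refine ⟨![(!₂[3, -2] : EuclideanSpace ℝ (Fin 2)), !₂[0, 3], !₂[1, 3]],
    ![(!₂[-1, -3] : EuclideanSpace ℝ (Fin 2)), !₂[2, 2], !₂[3, -1]],
    1, Equiv.swap 0 2 * Equiv.swap 1 2, ?_, ?_, ?_, ?_⟩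
  · intro a b h
    fin_cases a <;> fin_cases b <;>
      first
      | rfl
      | (exfalso; have h0 := congrArg (· 0) h; have h1 := congrArg (· 1) h;
         revert h0 h1; norm_num [Matrix.cons_val_zero, Matrix.cons_val_one, Matrix.head_cons])
  · intro a b h
    fin_cases a <;> fin_cases b <;>
      first
      | rfl
      | (exfalso; have h0 := congrArg (· 0) h; have h1 := congrArg (· 1) h;
         revert h0 h1; norm_num [Matrix.cons_val_zero, Matrix.cons_val_one, Matrix.head_cons])
  · norm_num (config := {decide := true}) [Fin.sum_univ_three, norm_sq_two, Equiv.swap_apply_def,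
      Matrix.cons_val_zero, Matrix.cons_val_one, Matrix.head_cons, Matrix.cons_val_two, Matrix.tail_cons]
  · intro i j hij
    fin_cases i <;> fin_cases j <;>
      first
      | (exact absurd rfl hij)
      | norm_num (config := {decide := true}) [Fin.sum_univ_three, norm_sq_two, Equiv.swap_apply_def,
          Matrix.cons_val_zero, Matrix.cons_val_one, Matrix.head_cons, Matrix.cons_val_two, Matrix.tail_cons]
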